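/- arXiv:1106.0092 — 10 statements merged into one kernel-verified Lean document; each statement's English description precedes it below -/
import Mathlib

section
/- The function U(x,t) = sin(x)/√(cos²(x) + e^{2t}), defined for all (x,t) ∈ ℝ², satisfies the nonlinear diffusion equation U_t = ∂_x(U_x/(1 + U²)) at every point of ℝ². -/
open Real

/-- `U(x,t) = sin(x)/√(cos²(x) + e^{2t})` satisfies the nonlinear diffusion equation
`U_t = ∂_x (U_x / (1 + U²))` at every point of `ℝ²`. -/
theorem periodic_slope_solves_diffusion
    (U : ℝ → ℝ → ℝ)
    (hU : ∀ x t : ℝ, U x t = Real.sin x / Real.sqrt ((Real.cos x) ^ 2 + Real.exp (2 * t)))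
    (x t : ℝ) :
    deriv (fun τ => U x τ) t
      = deriv (fun ξ => deriv (fun ξ' => U ξ' t) ξ / (1 + (U ξ t) ^ 2)) x := by
  have hE : 0 < Real.exp (2 * t) := Real.exp_pos _
  have hD : ∀ ξ : ℝ, 0 < Real.cos ξ ^ 2 + Real.exp (2 * t) := fun ξ =>
    add_pos_of_nonneg_of_pos (sq_nonneg _) hE
  have hs0 : ∀ ξ : ℝ, 0 < Real.sqrt (Real.cos ξ ^ 2 + Real.exp (2 * t)) := fun ξ =>
    Real.sqrt_pos.mpr (hD ξ)
  have hssq : ∀ ξ : ℝ, (Real.sqrt (Real.cos ξ ^ 2 + Real.exp (2 * t))) ^ 2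
      = Real.cos ξ ^ 2 + Real.exp (2 * t) := fun ξ => Real.sq_sqrt (hD ξ).le
  -- derivative of sqrt(D ξ) in ξ
  have hsq : ∀ ξ : ℝ, HasDerivAt (fun ξ' => Real.sqrt (Real.cos ξ' ^ 2 + Real.exp (2 * t)))
      ((2 * Real.cos ξ * (-Real.sin ξ)) / (2 * Real.sqrt (Real.cos ξ ^ 2 + Real.exp (2 * t)))) ξ := by
    intro ξ
    have h1 : HasDerivAt (fun ξ' : ℝ => Real.cos ξ' ^ 2 + Real.exp (2 * t))
        (2 * Real.cos ξ * (-Real.sin ξ)) ξ := by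
      simpa using ((Real.hasDerivAt_cos ξ).pow 2).add_const (Real.exp (2 * t))
    simpa using h1.sqrt (ne_of_gt (hD ξ))
  -- derivative of U in ξ
  have hUx : ∀ ξ : ℝ, HasDerivAt (fun ξ' => Real.sin ξ' / Real.sqrt (Real.cos ξ' ^ 2 + Real.exp (2 * t)))
      (Real.cos ξ * (1 + Real.exp (2 * t)) / (Real.sqrt (Real.cos ξ ^ 2 + Real.exp (2 * t))) ^ 3) ξ := by
    intro ξ
    have h := (Real.hasDerivAt_sin ξ).div (hsq ξ) (ne_of_gt (hs0 ξ))
    refine h.congr_deriv (Eq.symm ?_)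
    have h1 := hs0 ξ
    have h2 := hssq ξ
    set s := Real.sqrt (Real.cos ξ ^ 2 + Real.exp (2 * t)) with hsdef
    field_simp
    linear_combination (-Real.cos ξ) * (Real.sin_sq_add_cos_sq ξ)
      + (-Real.cos ξ) * h2
  -- the inner function simplifies
  have hinner : (fun ξ => deriv (fun ξ' => U ξ' t) ξ / (1 + (U ξ t) ^ 2))
      = fun ξ => Real.cos ξ / Real.sqrt (Real.cos ξ ^ 2 + Real.exp (2 * t)) := by
    funext ξ
    have hfun : (fun ξ' => U ξ' t)
        = fun ξ' => Real.sin ξ' / Real.sqrt (Real.cos ξ' ^ 2 + Real.exp (2 * t)) := by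
      funext ξ'; exact hU ξ' t
    rw [hfun, (hUx ξ).deriv, hU ξ t]
    have h1 := hs0 ξ
    have h2 := hssq ξ
    set s := Real.sqrt (Real.cos ξ ^ 2 + Real.exp (2 * t)) with hsdef
    have h3 : 1 + (Real.sin ξ / s) ^ 2 = (1 + Real.exp (2 * t)) / s ^ 2 := by
      field_simp
      nlinarith [Real.sin_sq_add_cos_sq ξ]
    rw [h3]
    have h4 : (1 : ℝ) + Real.exp (2 * t) ≠ 0 := by positivity
    field_simp
  rw [hinner]
  -- RHS derivative
  have hRHS : HasDerivAt (fun ξ => Real.cos ξ / Real.sqrt (Real.cos ξ ^ 2 + Real.exp (2 * t)))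
      (-(Real.sin x * Real.exp (2 * t)) / (Real.sqrt (Real.cos x ^ 2 + Real.exp (2 * t))) ^ 3) x := by
    have h := (Real.hasDerivAt_cos x).div (hsq x) (ne_of_gt (hs0 x))
    refine h.congr_deriv (Eq.symm ?_)
    have h1 := hs0 x
    have h2 := hssq x
    set s := Real.sqrt (Real.cos x ^ 2 + Real.exp (2 * t)) with hsdef
    field_simp
    linear_combination (Real.sin x) * h2
  rw [hRHS.deriv]
  -- LHS derivative
  have hfun2 : (fun τ => U x τ)
      = fun τ => Real.sin x / Real.sqrt (Real.cos x ^ 2 + Real.exp (2 * τ)) := by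
    funext τ; exact hU x τ
  rw [hfun2]
  have hDt : HasDerivAt (fun τ : ℝ => Real.cos x ^ 2 + Real.exp (2 * τ))
      (Real.exp (2 * t) * 2) t := by
    have h := (Real.hasDerivAt_exp (2 * t)).comp t ((hasDerivAt_id t).const_mul 2)
    simpa [mul_comm] using h.const_add (Real.cos x ^ 2)
  have hLHS : HasDerivAt (fun τ => Real.sin x / Real.sqrt (Real.cos x ^ 2 + Real.exp (2 * τ)))
      (-(Real.sin x * Real.exp (2 * t)) / (Real.sqrt (Real.cos x ^ 2 + Real.exp (2 * t))) ^ 3) t := by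
    have h := (hasDerivAt_const t (Real.sin x)).div (hDt.sqrt (ne_of_gt (hD x)))
      (ne_of_gt (hs0 x))
    refine h.congr_deriv (Eq.symm ?_)
    have h1 := hs0 x
    have h2 := hssq x
    set s := Real.sqrt (Real.cos x ^ 2 + Real.exp (2 * t)) with hsdef
    field_simp
    ring
  rw [hLHS.deriv]
end

section
/- The function y(x,t) = t − ln(cos(x) + √(cos²(x) − e^{2t})), defined on the set {(x,t) : t < 0, cos(x) > e^{t}, |x| < π/2}, satisfies the curve shortening equation y_t = y_xx/(1 + y_x²) at every point of its domain (this is one branch of the shrinking 'Angenent oval'). -/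
open Real

private lemma sqrt_pos_aux {t c : ℝ} (h : Real.exp t < c) :
    0 < c ^ 2 - Real.exp (2 * t) := by
  have h1 : Real.exp (2 * t) = Real.exp t ^ 2 := by
    rw [sq, ← Real.exp_add]; ring_nf
  have h0 : 0 < Real.exp t := Real.exp_pos t
  nlinarith

/-- first derivative in x at any point with exp t < cos ξ -/
private lemma deriv_x_aux (y : ℝ → ℝ → ℝ)
    (hy : ∀ x t : ℝ, y x t
      = t - Real.log (Real.cos x + Real.sqrt ((Real.cos x) ^ 2 - Real.exp (2 * t))))
    (t : ℝ) {ξ : ℝ} (hξ : Real.exp t < Real.cos ξ) :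
    HasDerivAt (fun ξ' => y ξ' t)
      (Real.sin ξ / Real.sqrt (Real.cos ξ ^ 2 - Real.exp (2 * t))) ξ := by
  have heq : (fun ξ' => y ξ' t)
      = fun ξ' => t - Real.log (Real.cos ξ' + Real.sqrt (Real.cos ξ' ^ 2 - Real.exp (2 * t))) :=
    funext fun ξ' => hy ξ' t
  rw [heq]
  have hu : 0 < Real.cos ξ := lt_trans (Real.exp_pos t) hξ
  have hpos : 0 < Real.cos ξ ^ 2 - Real.exp (2 * t) := sqrt_pos_aux hξ
  have hs : 0 < Real.sqrt (Real.cos ξ ^ 2 - Real.exp (2 * t)) := Real.sqrt_pos.mpr hpos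
  have hsq : Real.sqrt (Real.cos ξ ^ 2 - Real.exp (2 * t)) ^ 2
      = Real.cos ξ ^ 2 - Real.exp (2 * t) := Real.sq_sqrt hpos.le
  have h1 : HasDerivAt (fun ξ' => Real.cos ξ' ^ 2 - Real.exp (2 * t))
      (2 * Real.cos ξ ^ 1 * (-Real.sin ξ)) ξ := by
    simpa using ((Real.hasDerivAt_cos ξ).pow 2).sub_const (Real.exp (2 * t))
  have h2 := h1.sqrt (ne_of_gt hpos)
  have h3 := (Real.hasDerivAt_cos ξ).add h2
  have hin : 0 < Real.cos ξ + Real.sqrt (Real.cos ξ ^ 2 - Real.exp (2 * t)) := by positivity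
  have h4 := ((hasDerivAt_const ξ t).sub (h3.log (ne_of_gt hin)))
  refine h4.congr_deriv ?_
  simp only [Pi.add_apply]
  field_simp
  ring_nf

/-- One branch of the shrinking 'Angenent oval',
`y(x,t) = t − ln(cos(x) + √(cos²(x) − e^{2t}))`, satisfies the curve shortening
equation `y_t = y_xx / (1 + y_x²)` on the set
`{(x,t) : t < 0, cos(x) > e^t, |x| < π/2}`. -/
theorem angenent_oval_branch_solves_CSE
    (y : ℝ → ℝ → ℝ)
    (hy : ∀ x t : ℝ, y x t
      = t - Real.log (Real.cos x + Real.sqrt ((Real.cos x) ^ 2 - Real.exp (2 * t))))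
    (x t : ℝ) (ht : t < 0) (hcos : Real.exp t < Real.cos x) (hx : |x| < Real.pi / 2) :
    deriv (fun τ => y x τ) t
      = deriv (fun ξ => deriv (fun ξ' => y ξ' t) ξ) x
        / (1 + (deriv (fun ξ => y ξ t) x) ^ 2) := by
  have hu : 0 < Real.cos x := lt_trans (Real.exp_pos t) hcos
  have hpos : 0 < Real.cos x ^ 2 - Real.exp (2 * t) := sqrt_pos_aux hcos
  set a := Real.exp (2 * t) with ha
  set s := Real.sqrt (Real.cos x ^ 2 - a) with hsdef
  have hs : 0 < s := Real.sqrt_pos.mpr hpos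
  have hsq : s ^ 2 = Real.cos x ^ 2 - a := Real.sq_sqrt hpos.le
  have ha1 : a < 1 := by
    rw [ha]
    have : 2 * t < 0 := by linarith
    calc Real.exp (2 * t) < Real.exp 0 := Real.exp_lt_exp.mpr this
    _ = 1 := Real.exp_zero
  have hin : 0 < Real.cos x + s := by positivity
  -- t derivative
  have hT : HasDerivAt (fun τ => y x τ) (1 + a / (s * (Real.cos x + s))) t := by
    have heq : (fun τ => y x τ)
        = fun τ => τ - Real.log (Real.cos x + Real.sqrt (Real.cos x ^ 2 - Real.exp (2 * τ))) :=
      funext fun τ => hy x τ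
    rw [heq]
    have h0 : HasDerivAt (fun τ : ℝ => Real.exp (2 * τ)) (2 * a) t := by
      have h := ((hasDerivAt_id t).const_mul 2).exp
      simpa [ha, mul_comm] using h
    have h1 : HasDerivAt (fun τ => Real.cos x ^ 2 - Real.exp (2 * τ)) (-(2 * a)) t := by
      exact ((hasDerivAt_const t (Real.cos x ^ 2)).sub h0).congr_deriv (by ring)
    have h2 := h1.sqrt (ne_of_gt hpos)
    have h3 := (hasDerivAt_const t (Real.cos x)).add h2
    have h4 := (hasDerivAt_id t).sub (h3.log (ne_of_gt hin))
    refine h4.congr_deriv ?_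
    simp only [Pi.add_apply]
    rw [← hsdef]
    field_simp
    ring
  -- first x derivative
  have hX := deriv_x_aux y hy t hcos
  -- second x derivative
  have hev : (fun ξ => deriv (fun ξ' => y ξ' t) ξ)
      =ᶠ[nhds x] fun ξ => Real.sin ξ / Real.sqrt (Real.cos ξ ^ 2 - a) := by
    have hopen : IsOpen {ξ : ℝ | Real.exp t < Real.cos ξ} :=
      isOpen_lt continuous_const Real.continuous_cos
    filter_upwards [hopen.mem_nhds (show x ∈ _ from hcos)] with ξ hξ
    exact (deriv_x_aux y hy t hξ).deriv
  have hXX : deriv (fun ξ => deriv (fun ξ' => y ξ' t) ξ) x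
      = Real.cos x * (1 - a) / s ^ 3 := by
    rw [hev.deriv_eq]
    have h1 : HasDerivAt (fun ξ' => Real.cos ξ' ^ 2 - a)
        (2 * Real.cos x ^ 1 * (-Real.sin x)) x := by
      simpa using ((Real.hasDerivAt_cos x).pow 2).sub_const a
    have h2 := h1.sqrt (ne_of_gt hpos)
    have h3 := (Real.hasDerivAt_sin x).div h2 (ne_of_gt hs)
    rw [show (fun ξ => Real.sin ξ / √(Real.cos ξ ^ 2 - a)) = (Real.sin / fun y => √(Real.cos y ^ 2 - a)) from rfl, h3.deriv]
    rw [← hsdef]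
    have hsx : Real.sin x ^ 2 = 1 - Real.cos x ^ 2 := by
      nlinarith [Real.sin_sq_add_cos_sq x]
    field_simp
    linear_combination hsq + hsx
  rw [hT.deriv, hXX, hX.deriv, ← hsdef]
  have h1a : (0:ℝ) < 1 - a := by linarith
  have hsx : Real.sin x ^ 2 = 1 - Real.cos x ^ 2 := by
    nlinarith [Real.sin_sq_add_cos_sq x]
  have hden : (0:ℝ) < s ^ 2 + Real.sin x ^ 2 := by positivity
  field_simp
  linear_combination (Real.cos x * (Real.cos x + s) + s ^ 2 + Real.sin x ^ 2) * hsq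
    + (Real.cos x * (Real.cos x + s)) * hsx
end

section
/- For t < 0 define the eccentricity ε(t) = √(1 − (arccos(e^{t})/arcosh(e^{−t}))²), where arccos(e^{t}) and arcosh(e^{−t}) are the semi-axis lengths of the oval cosh(y) = e^{−t}·cos(x). Then lim_{t→0⁻} ε(t)/√(−t) = √(2/3); in particular ε(t) → 0 as t → 0⁻, so the oval approaches circularity at extinction. -/
/-- Inverse hyperbolic cosine: `arcosh y = ln(y + √(y² − 1))` (for `y ≥ 1`). -/
noncomputable def arcosh (y : ℝ) : ℝ := Real.log (y + Real.sqrt (y ^ 2 - 1))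

/-- Eccentricity `ε(t) = √(1 − (arccos(e^t)/arcosh(e^{−t}))²)` of the Angenent oval. -/
noncomputable def ovalEccentricity (t : ℝ) : ℝ :=
  Real.sqrt (1 - (Real.arccos (Real.exp t) / arcosh (Real.exp (-t))) ^ 2)

open Real Filter Set Topology

/-- Auxiliary function: `Lfun a = arcosh (1 / cos a)` (inverse Gudermannian). -/
noncomputable def Lfun (a : ℝ) : ℝ := Real.log (1 + Real.sin a) - Real.log (Real.cos a)

lemma ev_Ioo : ∀ᶠ a in 𝓝[>] (0:ℝ), a ∈ Ioo (0:ℝ) (π/2) :=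
  Ioo_mem_nhdsGT_of_mem ⟨le_refl 0, by positivity⟩

lemma tendsto_sin_div : Tendsto (fun a : ℝ => Real.sin a / a) (𝓝[>] 0) (𝓝 1) := by
  have h := Real.hasDerivAt_sin 0
  rw [hasDerivAt_iff_tendsto_slope] at h
  have h2 : Tendsto (slope Real.sin 0) (𝓝[>] 0) (𝓝 (Real.cos 0)) :=
    h.mono_left (nhdsWithin_mono _ fun x hx => ne_of_gt hx)
  rw [Real.cos_zero] at h2
  refine h2.congr fun a => ?_
  simp [slope_def_field, div_eq_div_iff]

lemma tendsto_one_sub_cos :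
    Tendsto (fun a : ℝ => (1 - Real.cos a) / a ^ 2) (𝓝[>] 0) (𝓝 (1/2)) := by
  have hhalf : Tendsto (fun a : ℝ => a / 2) (𝓝[>] (0:ℝ)) (𝓝[>] (0:ℝ)) := by
    apply tendsto_nhdsWithin_of_tendsto_nhds_of_eventually_within
    · have h0 : Tendsto (fun a : ℝ => a / 2) (𝓝 0) (𝓝 (0 / 2)) :=
        (continuous_id.div_const 2).tendsto 0
      norm_num at h0
      exact h0.mono_left nhdsWithin_le_nhds
    · filter_upwards [self_mem_nhdsWithin] with a (ha : (0:ℝ) < a)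
      exact half_pos ha
  have h := tendsto_sin_div.comp hhalf
  have h2 : Tendsto (fun a : ℝ => (Real.sin (a/2) / (a/2)) ^ 2 / 2) (𝓝[>] 0) (𝓝 (1/2)) := by
    simpa using (h.pow 2).div_const 2
  refine h2.congr' ?_
  filter_upwards [self_mem_nhdsWithin] with a (ha : (0:ℝ) < a)
  have hs : Real.sin (a/2) ^ 2 = (1 - Real.cos a) / 2 := by
    have h1 := Real.sin_sq_add_cos_sq (a/2)
    have h2 := Real.cos_two_mul (a/2)
    have h3 : 2 * (a/2) = a := by ring
    rw [h3] at h2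
    linarith
  have ha' : a ≠ 0 := ne_of_gt ha
  field_simp [div_pow] at *
  nlinarith [hs]

lemma tendsto_log_slope : Tendsto (fun x : ℝ => Real.log x / (x - 1)) (𝓝[≠] 1) (𝓝 1) := by
  have h := Real.hasDerivAt_log (one_ne_zero)
  rw [hasDerivAt_iff_tendsto_slope] at h
  norm_num at h
  refine h.congr fun x => ?_
  simp [slope_def_field]

lemma tendsto_neg_log_cos :
    Tendsto (fun a : ℝ => (-Real.log (Real.cos a)) / a ^ 2) (𝓝[>] 0) (𝓝 (1/2)) := by
  have hcos : Tendsto (fun a : ℝ => Real.cos a) (𝓝[>] (0:ℝ)) (𝓝[≠] (1:ℝ)) := by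
    apply tendsto_nhdsWithin_of_tendsto_nhds_of_eventually_within
    · simpa using (Real.continuous_cos.tendsto 0).mono_left nhdsWithin_le_nhds
    · filter_upwards [ev_Ioo] with a ha
      have : Real.cos a < Real.cos 0 :=
        Real.cos_lt_cos_of_nonneg_of_le_pi (le_refl 0) (by linarith [ha.2, Real.pi_pos]) ha.1
      rw [Real.cos_zero] at this
      exact ne_of_lt this
  have h1 := tendsto_log_slope.comp hcos
  have h2 := h1.mul tendsto_one_sub_cos
  rw [one_mul] at h2
  refine h2.congr' ?_
  filter_upwards [ev_Ioo] with a ha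
  have hlt : Real.cos a < 1 := by
    have : Real.cos a < Real.cos 0 :=
      Real.cos_lt_cos_of_nonneg_of_le_pi (le_refl 0) (by linarith [ha.2, Real.pi_pos]) ha.1
    simpa using this
  have hne : Real.cos a - 1 ≠ 0 := by linarith
  have ha' : a ≠ 0 := ne_of_gt ha.1
  simp only [Function.comp]
  field_simp
  ring

lemma hasDerivAt_Lfun {a : ℝ} (hc : 0 < Real.cos a) :
    HasDerivAt Lfun (1 / Real.cos a) a := by
  have hpyth := Real.sin_sq_add_cos_sq a
  have hs : (1 : ℝ) + Real.sin a ≠ 0 := by nlinarith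
  have h1 : HasDerivAt (fun x => Real.log (1 + Real.sin x))
      (Real.cos a / (1 + Real.sin a)) a :=
    ((Real.hasDerivAt_sin a).const_add 1).log hs
  have h2 : HasDerivAt (fun x => Real.log (Real.cos x))
      (-Real.sin a / Real.cos a) a :=
    (Real.hasDerivAt_cos a).log (ne_of_gt hc)
  have h := h1.sub h2
  refine h.congr_deriv ?_
  field_simp [ne_of_gt hc]
  nlinarith

lemma tendsto_Lfun_zero : Tendsto Lfun (𝓝[>] 0) (𝓝 0) := by
  have h1 : ContinuousAt (fun a : ℝ => Real.log (1 + Real.sin a)) 0 :=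
    ContinuousAt.log (by fun_prop) (by norm_num)
  have h2 : ContinuousAt (fun a : ℝ => Real.log (Real.cos a)) 0 :=
    ContinuousAt.log (by fun_prop) (by norm_num)
  have h := (h1.sub h2).tendsto.mono_left (nhdsWithin_le_nhds (s := Ioi (0:ℝ)))
  exact (by simpa [Pi.sub_def] using h :
    Tendsto (fun a => Real.log (1 + Real.sin a) - Real.log (Real.cos a)) (𝓝[>] 0) (𝓝 0))

lemma cos_pos_of_Ioo {a : ℝ} (ha : a ∈ Ioo (0:ℝ) (π/2)) : 0 < Real.cos a :=
  Real.cos_pos_of_mem_Ioo ⟨by linarith [ha.1, Real.pi_pos], ha.2⟩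

lemma tendsto_Lfun_div : Tendsto (fun a => Lfun a / a) (𝓝[>] 0) (𝓝 1) := by
  apply HasDerivAt.lhopital_zero_nhdsGT (f' := fun a => 1 / Real.cos a)
    (g' := fun _ => (1:ℝ))
  · filter_upwards [ev_Ioo] with a ha
    exact hasDerivAt_Lfun (cos_pos_of_Ioo ha)
  · filter_upwards with a; exact hasDerivAt_id a
  · filter_upwards with a; norm_num
  · exact tendsto_Lfun_zero
  · exact tendsto_id.mono_right nhdsWithin_le_nhds
  · have : ContinuousAt (fun a : ℝ => 1 / Real.cos a) 0 := by
      apply ContinuousAt.div continuousAt_const Real.continuous_cos.continuousAt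
      norm_num
    have h := this.tendsto.mono_left (nhdsWithin_le_nhds (s := Ioi (0:ℝ)))
    simpa using h

lemma tendsto_Lfun_sub :
    Tendsto (fun a => (Lfun a - a) / a ^ 3) (𝓝[>] 0) (𝓝 (1/6)) := by
  apply HasDerivAt.lhopital_zero_nhdsGT (f' := fun a => 1 / Real.cos a - 1)
    (g' := fun a => 3 * a ^ 2)
  · filter_upwards [ev_Ioo] with a ha
    exact (hasDerivAt_Lfun (cos_pos_of_Ioo ha)).sub (hasDerivAt_id a)
  · filter_upwards with a
    simpa using hasDerivAt_pow 3 a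
  · filter_upwards [self_mem_nhdsWithin] with a (ha : (0:ℝ) < a)
    positivity
  · have := tendsto_Lfun_zero.sub (tendsto_id.mono_right nhdsWithin_le_nhds)
    simpa using this
  · have : ContinuousAt (fun a : ℝ => a ^ 3) 0 := by fun_prop
    have h := this.tendsto.mono_left (nhdsWithin_le_nhds (s := Ioi (0:ℝ)))
    simpa using h
  · have hc : ContinuousAt (fun a : ℝ => 1 / (3 * Real.cos a)) 0 := by
      apply ContinuousAt.div continuousAt_const (by fun_prop)
      norm_num
    have h := tendsto_one_sub_cos.mul
      (hc.tendsto.mono_left (nhdsWithin_le_nhds (s := Ioi (0:ℝ))))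
    have h' : Tendsto (fun a : ℝ => (1 - Real.cos a) / a ^ 2 * (1 / (3 * Real.cos a)))
        (𝓝[>] 0) (𝓝 (1/6)) := by
      convert h using 2
      norm_num
    refine h'.congr' ?_
    filter_upwards [ev_Ioo] with a ha
    have hc' : Real.cos a ≠ 0 := ne_of_gt (cos_pos_of_Ioo ha)
    have ha' : a ≠ 0 := ne_of_gt ha.1
    rw [eq_div_iff (by positivity)]
    field_simp

lemma Lfun_pos {a : ℝ} (ha : a ∈ Ioo (0:ℝ) (π/2)) : 0 < Lfun a := by
  have hc : 0 < Real.cos a := cos_pos_of_Ioo ha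
  have hc1 : Real.cos a < 1 := by
    have : Real.cos a < Real.cos 0 :=
      Real.cos_lt_cos_of_nonneg_of_le_pi (le_refl 0) (by linarith [ha.2, Real.pi_pos]) ha.1
    simpa using this
  have hs : 0 < Real.sin a :=
    Real.sin_pos_of_pos_of_lt_pi ha.1 (by linarith [ha.2, Real.pi_pos])
  have h1 : 0 < Real.log (1 + Real.sin a) := Real.log_pos (by linarith)
  have h2 : Real.log (Real.cos a) < 0 := Real.log_neg hc hc1
  unfold Lfun; linarith

lemma key_limit :
    Tendsto (fun a => (1 - (a / Lfun a) ^ 2) / (-Real.log (Real.cos a)))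
      (𝓝[>] 0) (𝓝 (2/3)) := by
  have h2 : Tendsto (fun a => (Lfun a + a) / a) (𝓝[>] (0:ℝ)) (𝓝 2) := by
    have := tendsto_Lfun_div.add (tendsto_const_nhds (x := (1:ℝ)))
    norm_num at this
    refine this.congr' ?_
    filter_upwards [self_mem_nhdsWithin] with a (ha : (0:ℝ) < a)
    field_simp
  have h3 : Tendsto (fun a => (a / Lfun a) ^ 2) (𝓝[>] (0:ℝ)) (𝓝 1) := by
    have := (tendsto_Lfun_div.inv₀ one_ne_zero).pow 2
    norm_num at this
    exact this
  have h4 : Tendsto (fun a => a ^ 2 / (-Real.log (Real.cos a))) (𝓝[>] (0:ℝ)) (𝓝 2) := by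
    have := tendsto_neg_log_cos.inv₀ (by norm_num)
    norm_num at this
    exact this
  have h := ((tendsto_Lfun_sub.mul h2).mul h3).mul h4
  have h' : Tendsto (fun a => (Lfun a - a) / a ^ 3 * ((Lfun a + a) / a) *
      (a / Lfun a) ^ 2 * (a ^ 2 / (-Real.log (Real.cos a)))) (𝓝[>] (0:ℝ)) (𝓝 (2/3)) := by
    convert h using 2
    norm_num
  refine h'.congr' ?_
  filter_upwards [ev_Ioo] with a ha
  have hc : 0 < Real.cos a := cos_pos_of_Ioo ha
  have hc1 : Real.cos a < 1 := by
    have : Real.cos a < Real.cos 0 :=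
      Real.cos_lt_cos_of_nonneg_of_le_pi (le_refl 0) (by linarith [ha.2, Real.pi_pos]) ha.1
    simpa using this
  have hlog : Real.log (Real.cos a) < 0 := Real.log_neg hc hc1
  have hL : Lfun a ≠ 0 := ne_of_gt (Lfun_pos ha)
  have ha' : a ≠ 0 := ne_of_gt ha.1
  have hlog' : Real.log (Real.cos a) ≠ 0 := ne_of_lt hlog
  field_simp
  ring

/-- As `t → 0⁻`, the eccentricity of the Angenent oval satisfies
`ε(t)/√(−t) → √(2/3)`; in particular `ε(t) → 0`, so the oval approaches
circularity at extinction. -/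
theorem oval_eccentricity_asymptotics :
    Filter.Tendsto (fun t : ℝ => ovalEccentricity t / Real.sqrt (-t))
      (nhdsWithin 0 (Set.Iio 0)) (nhds (Real.sqrt (2 / 3))) ∧
    Filter.Tendsto ovalEccentricity (nhdsWithin 0 (Set.Iio 0)) (nhds 0) := by
  have harccos : Tendsto (fun t : ℝ => Real.arccos (Real.exp t)) (𝓝[<] (0:ℝ)) (𝓝[>] (0:ℝ)) := by
    apply tendsto_nhdsWithin_of_tendsto_nhds_of_eventually_within
    · have hcont : ContinuousAt (fun t : ℝ => Real.arccos (Real.exp t)) 0 :=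
        Real.continuous_arccos.continuousAt.comp Real.continuous_exp.continuousAt
      have h := hcont.tendsto.mono_left (nhdsWithin_le_nhds (s := Iio (0:ℝ)))
      simpa using h
    · filter_upwards [self_mem_nhdsWithin] with t (ht : t < 0)
      exact Real.arccos_pos.mpr (Real.exp_lt_one_iff.mpr ht)
  -- key limit composed
  have hk := key_limit.comp harccos
  -- identification on Iio 0
  have hEq : ∀ᶠ t in 𝓝[<] (0:ℝ),
      (1 - (Real.arccos (Real.exp t) / Lfun (Real.arccos (Real.exp t))) ^ 2) /
        (-Real.log (Real.cos (Real.arccos (Real.exp t)))) =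
      (1 - (Real.arccos (Real.exp t) / _root_.arcosh (Real.exp (-t))) ^ 2) / (-t) := by
    filter_upwards [self_mem_nhdsWithin] with t (ht : t < 0)
    have he0 : 0 < Real.exp t := Real.exp_pos t
    have he1 : Real.exp t < 1 := Real.exp_lt_one_iff.mpr ht
    have hcos : Real.cos (Real.arccos (Real.exp t)) = Real.exp t :=
      Real.cos_arccos (by linarith) (le_of_lt he1)
    have hsin : Real.sin (Real.arccos (Real.exp t)) = Real.sqrt (1 - Real.exp t ^ 2) :=
      Real.sin_arccos _
    have hL : Lfun (Real.arccos (Real.exp t)) = _root_.arcosh (Real.exp (-t)) := by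
      rw [Lfun, _root_.arcosh, hcos, hsin, Real.exp_neg]
      have hsq : (Real.exp t)⁻¹ ^ 2 - 1 = (1 - Real.exp t ^ 2) / Real.exp t ^ 2 := by
        field_simp
      rw [hsq, Real.sqrt_div' _ (by positivity), Real.sqrt_sq he0.le]
      rw [← Real.log_div (by positivity) (ne_of_gt he0)]
      have : (Real.exp t)⁻¹ + Real.sqrt (1 - Real.exp t ^ 2) / Real.exp t =
          (1 + Real.sqrt (1 - Real.exp t ^ 2)) / Real.exp t := by
        field_simp
      rw [this]
    rw [hL, hcos, Real.log_exp]
  have hN : Tendsto (fun t : ℝ =>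
      (1 - (Real.arccos (Real.exp t) / _root_.arcosh (Real.exp (-t))) ^ 2) / (-t))
      (𝓝[<] (0:ℝ)) (𝓝 (2/3)) := by
    refine (hk.congr' ?_)
    filter_upwards [hEq] with t h
    simpa [Function.comp] using h
  have hsqrtN := (Real.continuous_sqrt.continuousAt.tendsto).comp hN
  have h1 : Tendsto (fun t : ℝ => ovalEccentricity t / Real.sqrt (-t))
      (𝓝[<] (0:ℝ)) (𝓝 (Real.sqrt (2/3))) := by
    refine hsqrtN.congr' ?_
    filter_upwards [self_mem_nhdsWithin] with t (ht : t < 0)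
    simp only [Function.comp, ovalEccentricity]
    rw [Real.sqrt_div' _ (by linarith : (0:ℝ) ≤ -t)]
  refine ⟨h1, ?_⟩
  have hs0 : Tendsto (fun t : ℝ => Real.sqrt (-t)) (𝓝[<] (0:ℝ)) (𝓝 0) := by
    have : ContinuousAt (fun t : ℝ => Real.sqrt (-t)) 0 := by fun_prop
    have h := this.tendsto.mono_left (nhdsWithin_le_nhds (s := Iio (0:ℝ)))
    simpa using h
  have h := h1.mul hs0
  rw [mul_zero] at h
  refine h.congr' ?_
  filter_upwards [self_mem_nhdsWithin] with t (ht : t < 0)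
  have : Real.sqrt (-t) ≠ 0 := ne_of_gt (Real.sqrt_pos.mpr (by linarith))
  field_simp
end

section
/- Let t < 0 and let y(x,t) = t − ln(cos(x) + √(cos²(x) − e^{2t})) be defined for cos(x) > e^{t}, |x| < π/2. Then the signed curvature of its graph satisfies y_xx/(1 + y_x²)^{3/2} = e^{−t}·cos(x)/√(e^{−2t} − 1) at every point of the domain. -/
open Real

/-- Basic facts at a point of the domain. -/
lemma aoc_aux (t ξ : ℝ) (ht : t < 0) (h : Real.exp t < Real.cos ξ) :
    0 < Real.cos ξ ∧ Real.exp (2 * t) < Real.cos ξ ^ 2 := by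
  have h0 : (0:ℝ) < Real.exp t := Real.exp_pos t
  have hc : 0 < Real.cos ξ := lt_trans h0 h
  refine ⟨hc, ?_⟩
  have : Real.exp (2 * t) = Real.exp t * Real.exp t := by
    rw [two_mul, Real.exp_add]
  rw [this, sq]
  exact mul_lt_mul'' h h h0.le h0.le

/-- First derivative of the Angenent oval branch. -/
lemma aoc_deriv1 (t ξ : ℝ) (ht : t < 0) (h : Real.exp t < Real.cos ξ) :
    HasDerivAt (fun ξ' => t - Real.log (Real.cos ξ' + Real.sqrt ((Real.cos ξ') ^ 2 - Real.exp (2 * t))))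
      (Real.sin ξ / Real.sqrt (Real.cos ξ ^ 2 - Real.exp (2 * t))) ξ := by
  obtain ⟨hc, hcE⟩ := aoc_aux t ξ ht h
  set E := Real.exp (2 * t) with hEdef
  have hEpos : 0 < E := Real.exp_pos _
  have hpos : 0 < Real.cos ξ ^ 2 - E := by linarith
  have hs0 : 0 < Real.sqrt (Real.cos ξ ^ 2 - E) := Real.sqrt_pos.2 hpos
  have hs2 : Real.sqrt (Real.cos ξ ^ 2 - E) ^ 2 = Real.cos ξ ^ 2 - E :=
    Real.sq_sqrt hpos.le
  have h1 : HasDerivAt (fun ξ' => Real.cos ξ' ^ 2 - E)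
      (2 * Real.cos ξ ^ 1 * (-Real.sin ξ)) ξ := by
    simpa using ((Real.hasDerivAt_cos ξ).pow 2).sub_const E
  have h2 := h1.sqrt (ne_of_gt hpos)
  have h3 := (Real.hasDerivAt_cos ξ).add h2
  have hu : Real.cos ξ + Real.sqrt (Real.cos ξ ^ 2 - E) ≠ 0 := by positivity
  have h5 := ((hasDerivAt_const ξ t).sub (h3.log hu))
  refine h5.congr_deriv ?_
  have hs0' : Real.sqrt (Real.cos ξ ^ 2 - E) ≠ 0 := ne_of_gt hs0
  simp only [Pi.add_apply]
  field_simp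
  ring

/-- Derivative of the curvature's numerator ingredient `sin ξ / √(cos²ξ − E)`. -/
lemma aoc_deriv2 (t x : ℝ) (ht : t < 0) (h : Real.exp t < Real.cos x) :
    HasDerivAt (fun ξ => Real.sin ξ / Real.sqrt (Real.cos ξ ^ 2 - Real.exp (2 * t)))
      (Real.cos x * (1 - Real.exp (2 * t)) / Real.sqrt (Real.cos x ^ 2 - Real.exp (2 * t)) ^ 3) x := by
  obtain ⟨hc, hcE⟩ := aoc_aux t x ht h
  set E := Real.exp (2 * t) with hEdef
  have hpos : 0 < Real.cos x ^ 2 - E := by linarith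
  have hs0 : 0 < Real.sqrt (Real.cos x ^ 2 - E) := Real.sqrt_pos.2 hpos
  have hs2 : Real.sqrt (Real.cos x ^ 2 - E) ^ 2 = Real.cos x ^ 2 - E :=
    Real.sq_sqrt hpos.le
  have h1 : HasDerivAt (fun ξ' => Real.cos ξ' ^ 2 - E)
      (2 * Real.cos x ^ 1 * (-Real.sin x)) x := by
    simpa using ((Real.hasDerivAt_cos x).pow 2).sub_const E
  have h2 := h1.sqrt (ne_of_gt hpos)
  have h6 := (Real.hasDerivAt_sin x).div h2 (ne_of_gt hs0)
  refine h6.congr_deriv ?_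
  have hs0' : Real.sqrt (Real.cos x ^ 2 - E) ≠ 0 := ne_of_gt hs0
  have hsc : Real.sin x ^ 2 = 1 - Real.cos x ^ 2 := by
    have := Real.sin_sq_add_cos_sq x; linarith
  set s := Real.sqrt (Real.cos x ^ 2 - E)
  have e1 : 2 * Real.cos x ^ 1 * (-Real.sin x) / (2 * s)
      = -(Real.cos x * Real.sin x) / s := by
    field_simp
  rw [e1]
  have e2 : Real.cos x * s - Real.sin x * (-(Real.cos x * Real.sin x) / s)
      = Real.cos x * (1 - E) / s := by
    field_simp
    linear_combination hs2 + hsc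
  rw [e2, div_div]
  congr 1
  ring

/-- The curvature `y_xx/(1 + y_x²)^{3/2}` of the graph of the Angenent-oval branch
`y(x,t) = t − ln(cos x + √(cos²x − e^{2t}))` equals `e^{−t}·cos x/√(e^{−2t} − 1)`
at every point of its domain. -/
theorem angenent_oval_curvature
    (y : ℝ → ℝ → ℝ)
    (hy : ∀ x t : ℝ, y x t
      = t - Real.log (Real.cos x + Real.sqrt ((Real.cos x) ^ 2 - Real.exp (2 * t))))
    (t : ℝ) (ht : t < 0)
    (x : ℝ) (hcos : Real.exp t < Real.cos x) (hx : |x| < Real.pi / 2) :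
    deriv (fun ξ => deriv (fun ξ' => y ξ' t) ξ) x
        / (1 + (deriv (fun ξ => y ξ t) x) ^ 2) ^ ((3 : ℝ) / 2)
      = Real.exp (-t) * Real.cos x / Real.sqrt (Real.exp (-2 * t) - 1) := by
  obtain ⟨hc, hcE⟩ := aoc_aux t x ht hcos
  set E := Real.exp (2 * t) with hEdef
  have hE1 : E < 1 := by
    have := Real.exp_lt_one_iff.2 (by linarith : 2 * t < 0)
    simpa [hEdef] using this
  have hpos : 0 < Real.cos x ^ 2 - E := by linarith
  have hs0 : 0 < Real.sqrt (Real.cos x ^ 2 - E) := Real.sqrt_pos.2 hpos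
  have hs2 : Real.sqrt (Real.cos x ^ 2 - E) ^ 2 = Real.cos x ^ 2 - E :=
    Real.sq_sqrt hpos.le
  set s := Real.sqrt (Real.cos x ^ 2 - E) with hsdef
  have hyfun : (fun ξ' => y ξ' t)
      = fun ξ' => t - Real.log (Real.cos ξ' + Real.sqrt ((Real.cos ξ') ^ 2 - E)) :=
    funext fun ξ' => hy ξ' t
  -- first derivative at x
  have hd1 : deriv (fun ξ' => y ξ' t) x = Real.sin x / s := by
    rw [hyfun]; exact (aoc_deriv1 t x ht hcos).deriv
  -- the first derivative agrees with g near x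
  have hopen : IsOpen {ξ : ℝ | Real.exp t < Real.cos ξ} :=
    isOpen_lt continuous_const Real.continuous_cos
  have hev : ∀ᶠ ξ in nhds x, Real.exp t < Real.cos ξ := hopen.eventually_mem hcos
  have hevd : (fun ξ => deriv (fun ξ' => y ξ' t) ξ)
      =ᶠ[nhds x] fun ξ => Real.sin ξ / Real.sqrt (Real.cos ξ ^ 2 - E) := by
    filter_upwards [hev] with ξ hξ
    rw [hyfun]; exact (aoc_deriv1 t ξ ht hξ).deriv
  have hd2 : deriv (fun ξ => deriv (fun ξ' => y ξ' t) ξ) x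
      = Real.cos x * (1 - E) / s ^ 3 := by
    rw [hevd.deriv_eq]
    exact (aoc_deriv2 t x ht hcos).deriv
  rw [hd1, hd2]
  -- algebra from here on
  have hsc : Real.sin x ^ 2 = 1 - Real.cos x ^ 2 := by
    have := Real.sin_sq_add_cos_sq x; linarith
  have hB : 1 + (Real.sin x / s) ^ 2 = (1 - E) / s ^ 2 := by
    field_simp
    nlinarith [hs2, hsc]
  rw [hB]
  have h1E : (0:ℝ) < 1 - E := by linarith
  -- compute the rpow
  have hP : ((1 - E) / s ^ 2 : ℝ) ^ ((3 : ℝ) / 2)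
      = (1 - E) * Real.sqrt (1 - E) / s ^ 3 := by
    have hA : (0:ℝ) ≤ (1 - E) / s ^ 2 := by positivity
    have h32 : ((3:ℝ)/2) = (3:ℕ) * ((1:ℝ)/2) := by norm_num
    rw [h32, Real.rpow_natCast_mul hA, ← Real.sqrt_eq_rpow]
    rw [show ((1 - E) / s ^ 2) ^ (3:ℕ) = ((1-E)/s^2)^2 * ((1-E)/s^2) by ring]
    rw [Real.sqrt_mul (sq_nonneg _), Real.sqrt_sq hA]
    rw [Real.sqrt_div h1E.le, Real.sqrt_sq hs0.le]
    field_simp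
  rw [hP]
  -- rewrite the RHS
  have hRHS : Real.sqrt (Real.exp (-2 * t) - 1)
      = Real.exp (-t) * Real.sqrt (1 - E) := by
    have h1 : Real.exp (-2 * t) - 1 = Real.exp (-t) ^ 2 * (1 - E) := by
      have e3 : Real.exp (-t) ^ 2 = Real.exp (-2 * t) := by
        rw [sq, ← Real.exp_add]; ring_nf
      rw [e3, mul_sub, mul_one, hEdef, ← Real.exp_add,
        show -2 * t + 2 * t = 0 by ring, Real.exp_zero]
    rw [h1, Real.sqrt_mul (sq_nonneg _), Real.sqrt_sq (Real.exp_pos _).le]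
  rw [hRHS]
  have hsq1E : 0 < Real.sqrt (1 - E) := Real.sqrt_pos.2 h1E
  have hexp : (0:ℝ) < Real.exp (-t) := Real.exp_pos _
  field_simp
end

section
/- Let K ≠ 0, X₀, τ₀ be real constants. The function Y(X,τ) = (1/K)·ln( (√(exp(2K²(τ−τ₀)) + cos²(K(X−X₀))) + cos(K(X−X₀))) · exp(−K²(τ−τ₀)) ), defined for all (X,τ) ∈ ℝ², satisfies the curve shortening (Mullins) equation Y_τ = Y_XX/(1 + Y_X²) at every point of ℝ². -/
/-- The spatially periodic exact solution
`Y(X,τ) = (1/K)·ln( (√(e^{2K²(τ−τ₀)} + cos²(K(X−X₀))) + cos(K(X−X₀)))·e^{−K²(τ−τ₀)} )`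
satisfies the curve shortening (Mullins) equation `Y_τ = Y_XX/(1 + Y_X²)`
at every point of `ℝ²`. -/
theorem periodic_solution_solves_Mullins (K X₀ τ₀ : ℝ) (hK : K ≠ 0)
    (Y : ℝ → ℝ → ℝ)
    (hY : ∀ X τ : ℝ, Y X τ
      = (1 / K) * Real.log
          ((Real.sqrt (Real.exp (2 * K ^ 2 * (τ - τ₀)) + (Real.cos (K * (X - X₀))) ^ 2)
              + Real.cos (K * (X - X₀)))
            * Real.exp (-(K ^ 2) * (τ - τ₀))))
    (X τ : ℝ) :
    deriv (fun s => Y X s) τ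
      = deriv (fun ξ => deriv (fun ξ' => Y ξ' τ) ξ) X
        / (1 + (deriv (fun ξ => Y ξ τ) X) ^ 2) := by
  -- basic positivity facts
  have hq : ∀ x t : ℝ, (0:ℝ) < Real.exp (2*K^2*(t-τ₀)) + Real.cos (K*(x-X₀))^2 :=
    fun x t => add_pos_of_pos_of_nonneg (Real.exp_pos _) (sq_nonneg _)
  have hS : ∀ x t : ℝ, 0 < Real.sqrt (Real.exp (2*K^2*(t-τ₀)) + Real.cos (K*(x-X₀))^2) :=
    fun x t => Real.sqrt_pos.2 (hq x t)
  have hSc : ∀ x t : ℝ,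
      0 < Real.sqrt (Real.exp (2*K^2*(t-τ₀)) + Real.cos (K*(x-X₀))^2) + Real.cos (K*(x-X₀)) := by
    intro x t
    have h1 : |Real.cos (K*(x-X₀))| < Real.sqrt (Real.exp (2*K^2*(t-τ₀)) + Real.cos (K*(x-X₀))^2) := by
      rw [← Real.sqrt_sq_eq_abs]
      exact Real.sqrt_lt_sqrt (sq_nonneg _) (by linarith [Real.exp_pos (2*K^2*(t-τ₀))])
    have := neg_abs_le (Real.cos (K*(x-X₀)))
    linarith
  -- rewrite Y in separated form
  have hY' : ∀ x t : ℝ, Y x t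
      = (1/K) * (Real.log (Real.sqrt (Real.exp (2*K^2*(t-τ₀)) + Real.cos (K*(x-X₀))^2)
          + Real.cos (K*(x-X₀))) + (-(K^2)*(t-τ₀))) := by
    intro x t
    rw [hY, Real.log_mul (ne_of_gt (hSc x t)) (Real.exp_ne_zero _), Real.log_exp]
  -- first derivative in X (at an arbitrary point x)
  have hDX : ∀ x : ℝ, HasDerivAt (fun ξ => Y ξ τ)
      (-Real.sin (K*(x-X₀)) / Real.sqrt (Real.exp (2*K^2*(τ-τ₀)) + Real.cos (K*(x-X₀))^2)) x := by
    intro x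
    have heq : (fun ξ => Y ξ τ) = fun ξ =>
        (1/K) * (Real.log (Real.sqrt (Real.exp (2*K^2*(τ-τ₀)) + Real.cos (K*(ξ-X₀))^2)
          + Real.cos (K*(ξ-X₀))) + (-(K^2)*(τ-τ₀))) := funext fun ξ => hY' ξ τ
    rw [heq]
    have hlin : HasDerivAt (fun ξ : ℝ => K*(ξ-X₀)) K x := by
      simpa using ((hasDerivAt_id x).sub_const X₀).const_mul K
    have hc := hlin.cos
    have hc2 := hc.pow 2
    have hg := hc2.const_add (Real.exp (2*K^2*(τ-τ₀)))
    have hs := hg.sqrt (ne_of_gt (hq x τ))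
    have hsum := hs.add hc
    have hlog := hsum.log (ne_of_gt (hSc x τ))
    have h := (hlog.add_const (-(K^2)*(τ-τ₀))).const_mul (1/K)
    refine h.congr_deriv (Eq.symm ?_)
    have hS' := (hS x τ).ne'
    have hSc' := (hSc x τ).ne'
    simp only [Pi.pow_apply, Pi.add_apply, Pi.neg_apply]
    set e := Real.exp (2*K^2*(τ-τ₀)) with he
    field_simp
    ring
  -- the first X-derivative as a function
  have hDXfun : (fun ξ => deriv (fun ξ' => Y ξ' τ) ξ)
      = fun ξ => -Real.sin (K*(ξ-X₀)) / Real.sqrt (Real.exp (2*K^2*(τ-τ₀)) + Real.cos (K*(ξ-X₀))^2) :=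
    funext fun ξ => (hDX ξ).deriv
  -- second derivative in X at X
  have hDXX : HasDerivAt (fun ξ : ℝ =>
      -Real.sin (K*(ξ-X₀)) / Real.sqrt (Real.exp (2*K^2*(τ-τ₀)) + Real.cos (K*(ξ-X₀))^2))
      (-K * Real.cos (K*(X-X₀)) * (Real.exp (2*K^2*(τ-τ₀)) + 1)
        / Real.sqrt (Real.exp (2*K^2*(τ-τ₀)) + Real.cos (K*(X-X₀))^2) ^ 3) X := by
    have hlin : HasDerivAt (fun ξ : ℝ => K*(ξ-X₀)) K X := by
      simpa using ((hasDerivAt_id X).sub_const X₀).const_mul K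
    have hc := hlin.cos
    have hc2 := hc.pow 2
    have hg := hc2.const_add (Real.exp (2*K^2*(τ-τ₀)))
    have hs := hg.sqrt (ne_of_gt (hq X τ))
    have hnum := hlin.sin.neg
    have h := hnum.div hs (ne_of_gt (hS X τ))
    refine h.congr_deriv (Eq.symm ?_)
    have hs2 : Real.sqrt (Real.exp (2*K^2*(τ-τ₀)) + Real.cos (K*(X-X₀))^2) ^ 2
        = Real.exp (2*K^2*(τ-τ₀)) + Real.cos (K*(X-X₀))^2 := Real.sq_sqrt (hq X τ).le
    have hsin : Real.sin (K*(X-X₀))^2 = 1 - Real.cos (K*(X-X₀))^2 := by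
      have := Real.sin_sq_add_cos_sq (K*(X-X₀)); linarith
    have hS' := (hS X τ).ne'
    set s := Real.sqrt (Real.exp (2*K^2*(τ-τ₀)) + Real.cos (K*(X-X₀))^2)
    simp only [Pi.pow_apply, Pi.add_apply, Pi.neg_apply]
    set e := Real.exp (2*K^2*(τ-τ₀)) with he
    field_simp
    linear_combination 2*Real.cos (K*(X-X₀))*(hsin+hs2) + 2*Real.cos (K*(X-X₀))*(Real.sin (K*(X-X₀))^2+s^2)*((s*s⁻¹)^2+s*s⁻¹+1)*(mul_inv_cancel₀ hS')
  -- derivative in τ at τ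
  have hDT : HasDerivAt (fun t => Y X t)
      (-K * Real.cos (K*(X-X₀)) / Real.sqrt (Real.exp (2*K^2*(τ-τ₀)) + Real.cos (K*(X-X₀))^2)) τ := by
    have heq : (fun t => Y X t) = fun t =>
        (1/K) * (Real.log (Real.sqrt (Real.exp (2*K^2*(t-τ₀)) + Real.cos (K*(X-X₀))^2)
          + Real.cos (K*(X-X₀))) + (-(K^2)*(t-τ₀))) := funext fun t => hY' X t
    rw [heq]
    have hlin : HasDerivAt (fun t : ℝ => 2*K^2*(t-τ₀)) (2*K^2) τ := by
      simpa using ((hasDerivAt_id τ).sub_const τ₀).const_mul (2*K^2)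
    have hexp := hlin.exp
    have hg := hexp.add_const (Real.cos (K*(X-X₀))^2)
    have hs := hg.sqrt (ne_of_gt (hq X τ))
    have hsum := hs.add_const (Real.cos (K*(X-X₀)))
    have hlog := hsum.log (ne_of_gt (hSc X τ))
    have hlin2 : HasDerivAt (fun t : ℝ => -(K^2)*(t-τ₀)) (-(K^2)) τ := by
      simpa using ((hasDerivAt_id τ).sub_const τ₀).const_mul (-(K^2))
    have h := (hlog.add hlin2).const_mul (1/K)
    refine h.congr_deriv (Eq.symm ?_)
    have hs2 : Real.sqrt (Real.exp (2*K^2*(τ-τ₀)) + Real.cos (K*(X-X₀))^2) ^ 2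
        = Real.exp (2*K^2*(τ-τ₀)) + Real.cos (K*(X-X₀))^2 := Real.sq_sqrt (hq X τ).le
    have hS' := (hS X τ).ne'
    have hSc' := (hSc X τ).ne'
    set s := Real.sqrt (Real.exp (2*K^2*(τ-τ₀)) + Real.cos (K*(X-X₀))^2)
    set e := Real.exp (2*K^2*(τ-τ₀)) with he
    field_simp
    linear_combination hs2
  -- put everything together
  rw [hDT.deriv, hDXfun, hDXX.deriv, (hDX X).deriv]
  have hs2 : Real.sqrt (Real.exp (2*K^2*(τ-τ₀)) + Real.cos (K*(X-X₀))^2) ^ 2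
      = Real.exp (2*K^2*(τ-τ₀)) + Real.cos (K*(X-X₀))^2 := Real.sq_sqrt (hq X τ).le
  have hsin : Real.sin (K*(X-X₀))^2 = 1 - Real.cos (K*(X-X₀))^2 := by
    have := Real.sin_sq_add_cos_sq (K*(X-X₀)); linarith
  have hS' := (hS X τ).ne'
  set s := Real.sqrt (Real.exp (2*K^2*(τ-τ₀)) + Real.cos (K*(X-X₀))^2)
  have hden : 1 + (-Real.sin (K*(X-X₀)) / s)^2 ≠ 0 := by
    have : (0:ℝ) ≤ (-Real.sin (K*(X-X₀)) / s)^2 := sq_nonneg _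
    positivity
  set e := Real.exp (2*K^2*(τ-τ₀)) with he
  field_simp
  linear_combination (-Real.cos (K*(X-X₀)))*hs2 + (-Real.cos (K*(X-X₀)))*hsin
end

section
/- Let K > 0 and τ₀ ∈ ℝ, and define the amplitude Y_max(τ) = (1/K)·ln( (√(exp(2K²(τ−τ₀)) + 1) + 1)·exp(−K²(τ−τ₀)) ). Then lim_{τ→−∞} [ Y_max(τ) − K(τ₀ − τ) − (ln 2)/K ] = 0; that is, at early times the amplitude of the periodic solution decreases linearly in time with slope −K, up to an exponentially small error. -/
/-- Early-time behaviour of the amplitude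
`Y_max(τ) = (1/K)·ln((√(e^{2K²(τ−τ₀)} + 1) + 1)·e^{−K²(τ−τ₀)})` of the periodic
solution of the curve shortening equation: as `τ → −∞`,
`Y_max(τ) − K(τ₀ − τ) − (ln 2)/K → 0`, i.e. the amplitude decreases linearly in
time with slope `−K` up to an exponentially small error. -/
theorem periodic_solution_amplitude_early_times (K τ₀ : ℝ) (hK : 0 < K) :
    Filter.Tendsto
      (fun τ : ℝ =>
        (1 / K) * Real.log
            ((Real.sqrt (Real.exp (2 * K ^ 2 * (τ - τ₀)) + 1) + 1)
              * Real.exp (-(K ^ 2) * (τ - τ₀)))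
          - K * (τ₀ - τ) - Real.log 2 / K)
      Filter.atBot (nhds 0) := by
  have hK2 : (0:ℝ) < 2 * K ^ 2 := by positivity
  have h1 : Filter.Tendsto (fun τ : ℝ => 2 * K ^ 2 * (τ - τ₀)) Filter.atBot Filter.atBot := by
    have := (Filter.tendsto_atBot_add_const_right Filter.atBot (-τ₀) Filter.tendsto_id).const_mul_atBot hK2
    exact this.congr (fun τ => by simp only [id_eq]; ring)
  have h2 : Filter.Tendsto (fun τ : ℝ => Real.exp (2 * K ^ 2 * (τ - τ₀))) Filter.atBot (nhds 0) :=
    Real.tendsto_exp_atBot.comp h1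
  have h3 : Filter.Tendsto
      (fun τ : ℝ => (1 / K) * (Real.log (Real.sqrt (Real.exp (2 * K ^ 2 * (τ - τ₀)) + 1) + 1) - Real.log 2))
      Filter.atBot (nhds 0) := by
    have hcont : Filter.Tendsto (fun x : ℝ => (1 / K) * (Real.log (Real.sqrt (x + 1) + 1) - Real.log 2))
        (nhds 0) (nhds 0) := by
      have : Filter.Tendsto (fun x : ℝ => (1 / K) * (Real.log (Real.sqrt (x + 1) + 1) - Real.log 2))
          (nhds 0) (nhds ((1 / K) * (Real.log (Real.sqrt (0 + 1) + 1) - Real.log 2))) := by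
        apply Filter.Tendsto.const_mul
        apply Filter.Tendsto.sub_const
        apply Filter.Tendsto.comp (Real.continuousAt_log (by norm_num))
        exact (Filter.Tendsto.comp (Real.continuous_sqrt.tendsto _)
          ((continuous_id.add continuous_const).tendsto 0)).add_const 1
      simp only [zero_add, Real.sqrt_one, one_add_one_eq_two, sub_self, mul_zero] at this
      exact this
    exact hcont.comp h2
  refine h3.congr fun τ => ?_
  have hs : (0:ℝ) < Real.sqrt (Real.exp (2 * K ^ 2 * (τ - τ₀)) + 1) + 1 := by positivity
  rw [Real.log_mul (ne_of_gt hs) (Real.exp_ne_zero _), Real.log_exp]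
  field_simp
  ring
end

section
/- Let K > 0 and τ₀ ∈ ℝ, and let Y(X,τ) = (1/K)·ln( (√(exp(2K²(τ−τ₀)) + sin²(KX)) + sin(KX))·exp(−K²(τ−τ₀)) ). Then for every fixed X ∈ ℝ, lim_{τ→+∞} exp(K²(τ−τ₀))·Y(X,τ) = sin(KX)/K; that is, at large times the solution is approximated by an exponentially decaying single sine wave. -/
open Real Filter

/-- Large-time behaviour of the periodic solution
`Y(X,τ) = (1/K)·ln((√(e^{2K²(τ−τ₀)} + sin²(KX)) + sin(KX))·e^{−K²(τ−τ₀)})` of the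
curve shortening equation: for each fixed `X`,
`e^{K²(τ−τ₀)}·Y(X,τ) → sin(KX)/K` as `τ → +∞`, i.e. the solution is approximated
by an exponentially decaying single sine wave. -/
theorem periodic_solution_late_times (K τ₀ : ℝ) (hK : 0 < K)
    (Y : ℝ → ℝ → ℝ)
    (hY : ∀ X τ : ℝ, Y X τ
      = (1 / K) * Real.log
          ((Real.sqrt (Real.exp (2 * K ^ 2 * (τ - τ₀)) + (Real.sin (K * X)) ^ 2)
              + Real.sin (K * X))
            * Real.exp (-(K ^ 2) * (τ - τ₀))))
    (X : ℝ) :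
    Filter.Tendsto (fun τ : ℝ => Real.exp (K ^ 2 * (τ - τ₀)) * Y X τ)
      Filter.atTop (nhds (Real.sin (K * X) / K)) := by
  set s := Real.sin (K * X) with hs
  -- Rewrite the quantity using `arsinh`.
  have hY' : ∀ τ : ℝ, Real.exp (K ^ 2 * (τ - τ₀)) * Y X τ
      = (1 / K) * (Real.exp (K ^ 2 * (τ - τ₀))
          * Real.arsinh (s * Real.exp (-(K ^ 2) * (τ - τ₀)))) := by
    intro τ
    have he : (0:ℝ) < Real.exp (-(K ^ 2) * (τ - τ₀)) := Real.exp_pos _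
    have h2 : Real.exp (2 * K ^ 2 * (τ - τ₀)) * Real.exp (-(K ^ 2) * (τ - τ₀)) ^ 2 = 1 := by
      rw [← Real.exp_nat_mul, ← Real.exp_add, ← Real.exp_zero]
      congr 1; push_cast; ring
    have key : (Real.sqrt (Real.exp (2 * K ^ 2 * (τ - τ₀)) + s ^ 2) + s)
        * Real.exp (-(K ^ 2) * (τ - τ₀))
        = s * Real.exp (-(K ^ 2) * (τ - τ₀))
          + Real.sqrt (1 + (s * Real.exp (-(K ^ 2) * (τ - τ₀))) ^ 2) := by
      have h3 : (1 : ℝ) + (s * Real.exp (-(K ^ 2) * (τ - τ₀))) ^ 2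
          = (Real.exp (2 * K ^ 2 * (τ - τ₀)) + s ^ 2)
            * Real.exp (-(K ^ 2) * (τ - τ₀)) ^ 2 := by
        rw [add_mul, h2]; ring
      rw [h3, Real.sqrt_mul (by positivity), Real.sqrt_sq he.le]; ring
    rw [hY X τ, key, Real.arsinh]
    ring
  by_cases hs0 : s = 0
  · have : ∀ τ : ℝ, Real.exp (K ^ 2 * (τ - τ₀)) * Y X τ = 0 := by
      intro τ; rw [hY' τ, hs0]; simp
    simp only [this, hs0, zero_div]
    exact tendsto_const_nhds
  · -- the slope limit of arsinh at 0
    have hslope : Tendsto (fun x : ℝ => Real.arsinh x / x) (nhdsWithin 0 {(0:ℝ)}ᶜ) (nhds 1) := by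
      have h := Real.hasDerivAt_arsinh 0
      rw [hasDerivAt_iff_tendsto_slope] at h
      have h1 : (Real.sqrt (1 + (0:ℝ) ^ 2))⁻¹ = 1 := by norm_num
      rw [h1] at h
      refine h.congr fun x => ?_
      simp [slope_def_field, Real.arsinh_zero]
    have hx0 : Tendsto (fun τ : ℝ => s * Real.exp (-(K ^ 2) * (τ - τ₀))) atTop
        (nhdsWithin 0 {(0:ℝ)}ᶜ) := by
      rw [tendsto_nhdsWithin_iff]
      constructor
      · have hlin : Tendsto (fun τ : ℝ => -(K ^ 2) * (τ - τ₀)) atTop atBot := by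
          apply Tendsto.const_mul_atTop_of_neg (neg_lt_zero.mpr (by positivity : (0:ℝ) < K ^ 2))
          simpa [sub_eq_add_neg] using tendsto_atTop_add_const_right atTop (-τ₀) tendsto_id
        have := (Real.tendsto_exp_atBot.comp hlin).const_mul s
        simpa using this
      · exact Filter.Eventually.of_forall fun τ =>
          mul_ne_zero hs0 (Real.exp_ne_zero _)
    have hmain := (hslope.comp hx0).const_mul (s / K)
    rw [mul_one] at hmain
    refine hmain.congr fun τ => ?_
    rw [hY' τ]
    have hee : Real.exp (K ^ 2 * (τ - τ₀)) * Real.exp (-(K ^ 2) * (τ - τ₀)) = 1 := by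
      rw [← Real.exp_add, ← Real.exp_zero]; congr 1; ring
    have hK0 : K ≠ 0 := ne_of_gt hK
    have hE : Real.exp (K ^ 2 * (τ - τ₀)) = (Real.exp (-(K ^ 2) * (τ - τ₀)))⁻¹ := by
      rw [← Real.exp_neg]; congr 1; ring
    simp only [Function.comp]
    rw [hE]
    field_simp
end

section
/- Let D : ℝ → ℝ be continuous, let α ∈ ℝ, and let y(x,t) be a C² solution of the anisotropic diffusion equation y_t = D(y_x)·y_xx on an open set Ω ⊆ ℝ², with cos(α) + y_x(x,t)·sin(α) > 0 on Ω. Let ȳ be a C² function satisfying ȳ(x·cos(α) − y(x,t)·sin(α), t) = x·sin(α) + y(x,t)·cos(α) for all (x,t) ∈ Ω (i.e., the graph of ȳ(·,t) is the rotation by angle α of the graph of y(·,t)). Then at every point (x̄, t) of the form x̄ = x·cos(α) − y(x,t)·sin(α) with (x,t) ∈ Ω, ȳ satisfies ȳ_t = D̄(ȳ_x̄)·ȳ_x̄x̄, where D̄(s) = D( (s·cos(α) − sin(α)) / (s·sin(α) + cos(α)) ) / (s·sin(α) + cos(α))². -/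
/-- Rotational equivalence of anisotropic diffusion equations: if `y` is a C²
solution of `y_t = D(y_x)·y_xx` on an open set `Ω` with `cos α + y_x·sin α > 0`,
and the graph of `ȳ(·,t)` is the rotation by angle `α` of the graph of `y(·,t)`,
then `ȳ` satisfies `ȳ_t = D̄(ȳ_x̄)·ȳ_x̄x̄` with
`D̄(s) = D((s·cos α − sin α)/(s·sin α + cos α)) / (s·sin α + cos α)²`. -/
theorem anisotropic_diffusion_rotation_equivalence
    (D : ℝ → ℝ) (hD : Continuous D) (α : ℝ)
    (Ω : Set (ℝ × ℝ)) (hΩ : IsOpen Ω)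
    (y : ℝ → ℝ → ℝ)
    (hyC2 : ContDiffOn ℝ 2 (fun p : ℝ × ℝ => y p.1 p.2) Ω)
    (hyPDE : ∀ p : ℝ × ℝ, p ∈ Ω →
      deriv (fun τ => y p.1 τ) p.2
        = D (deriv (fun ξ => y ξ p.2) p.1)
            * deriv (fun ξ => deriv (fun ξ' => y ξ' p.2) ξ) p.1)
    (hpos : ∀ p : ℝ × ℝ, p ∈ Ω →
      0 < Real.cos α + deriv (fun ξ => y ξ p.2) p.1 * Real.sin α)
    (ybar : ℝ → ℝ → ℝ)
    (hybarC2 : ContDiff ℝ 2 (fun p : ℝ × ℝ => ybar p.1 p.2))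
    (hrot : ∀ p : ℝ × ℝ, p ∈ Ω →
      ybar (p.1 * Real.cos α - y p.1 p.2 * Real.sin α) p.2
        = p.1 * Real.sin α + y p.1 p.2 * Real.cos α) :
    ∀ p : ℝ × ℝ, p ∈ Ω →
      deriv (fun τ => ybar (p.1 * Real.cos α - y p.1 p.2 * Real.sin α) τ) p.2
        = (D (((deriv (fun ξ => ybar ξ p.2) (p.1 * Real.cos α - y p.1 p.2 * Real.sin α))
                  * Real.cos α - Real.sin α)
                / ((deriv (fun ξ => ybar ξ p.2) (p.1 * Real.cos α - y p.1 p.2 * Real.sin α))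
                  * Real.sin α + Real.cos α))
              / ((deriv (fun ξ => ybar ξ p.2) (p.1 * Real.cos α - y p.1 p.2 * Real.sin α))
                  * Real.sin α + Real.cos α) ^ 2)
            * deriv (fun ξ => deriv (fun ξ' => ybar ξ' p.2) ξ)
                (p.1 * Real.cos α - y p.1 p.2 * Real.sin α) := by
  intro p hp
  obtain ⟨x₀, t₀⟩ := p
  dsimp only at hp ⊢
  -- notation
  set Y : ℝ × ℝ → ℝ := fun p : ℝ × ℝ => y p.1 p.2 with hY
  set Ybar : ℝ × ℝ → ℝ := fun p : ℝ × ℝ => ybar p.1 p.2 with hYbar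
  -- the horizontal slice of Ω at time t₀
  set U : Set ℝ := {ξ : ℝ | (ξ, t₀) ∈ Ω} with hU
  have hUopen : IsOpen U := hΩ.preimage (by fun_prop : Continuous fun ξ : ℝ => (ξ, t₀))
  have hx₀U : x₀ ∈ U := hp
  -- the slice of y at time t₀ is C² on U
  have hfC2 : ContDiffOn ℝ 2 (fun ξ => y ξ t₀) U := by
    have := hyC2.comp ((contDiff_id.prodMk contDiff_const).contDiffOn :
      ContDiffOn ℝ 2 (fun ξ : ℝ => (ξ, t₀)) U) (fun ξ hξ => hξ)
    exact this
  have hfdOn : DifferentiableOn ℝ (fun ξ => y ξ t₀) U :=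
    hfC2.differentiableOn (by norm_num)
  have hfd : ∀ ξ ∈ U, HasDerivAt (fun ξ' => y ξ' t₀) (deriv (fun ξ' => y ξ' t₀) ξ) ξ := by
    intro ξ hξ
    exact ((hfdOn.differentiableAt (hUopen.mem_nhds hξ))).hasDerivAt
  set a : ℝ → ℝ := deriv (fun ξ' => y ξ' t₀) with haDef
  -- a is C¹ on U, hence differentiable at x₀
  have haC1 : ContDiffOn ℝ 1 a U := hfC2.deriv_of_isOpen hUopen (by norm_num)
  have haD : DifferentiableAt ℝ a x₀ :=
    (haC1.differentiableOn (by norm_num)).differentiableAt (hUopen.mem_nhds hx₀U)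
  set m : ℝ := deriv a x₀ with hmDef
  have ham : HasDerivAt a m x₀ := haD.hasDerivAt
  -- slice of ybar at time t₀ is C² everywhere
  have hFbarC2 : ContDiff ℝ 2 (fun ξ => ybar ξ t₀) := by
    have := hybarC2.comp ((contDiff_id.prodMk contDiff_const) :
      ContDiff ℝ 2 (fun ξ : ℝ => (ξ, t₀)))
    exact this
  set gbar : ℝ → ℝ := deriv (fun ξ => ybar ξ t₀) with hgbarDef
  have hFbarD : Differentiable ℝ (fun ξ => ybar ξ t₀) :=
    hFbarC2.differentiable (by norm_num)
  have hgbarC1 : ContDiff ℝ 1 gbar := by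
    have h2 : ContDiff ℝ (1 + 1 : ℕ) (fun ξ => ybar ξ t₀) := by
      exact_mod_cast hFbarC2
    exact (contDiff_succ_iff_deriv.mp (by exact_mod_cast h2)).2.2
  have hgbarD : Differentiable ℝ gbar := hgbarC1.differentiable (by norm_num)
  -- the rotated abscissa function
  set xb : ℝ → ℝ := fun ξ => ξ * Real.cos α - y ξ t₀ * Real.sin α with hxbDef
  set X : ℝ := x₀ * Real.cos α - y x₀ t₀ * Real.sin α with hX
  have hXxb : xb x₀ = X := rfl
  have hxbD : ∀ ξ ∈ U, HasDerivAt xb (Real.cos α - a ξ * Real.sin α) ξ := by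
    intro ξ hξ
    have h1 : HasDerivAt (fun ξ' : ℝ => ξ' * Real.cos α) (1 * Real.cos α) ξ :=
      (hasDerivAt_id ξ).mul_const _
    have h2 : HasDerivAt (fun ξ' : ℝ => y ξ' t₀ * Real.sin α) (a ξ * Real.sin α) ξ :=
      (hfd ξ hξ).mul_const _
    exact (h1.sub h2).congr_deriv (by ring)
  -- First-order relation E1 on U
  have E1 : ∀ ξ ∈ U, gbar (xb ξ) * (Real.cos α - a ξ * Real.sin α)
      = Real.sin α + a ξ * Real.cos α := by
    intro ξ hξ
    have hout : HasDerivAt (fun ξ' => ybar ξ' t₀) (gbar (xb ξ)) (xb ξ) :=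
      (hFbarD (xb ξ)).hasDerivAt
    have hL : HasDerivAt (fun ξ' => ybar (xb ξ') t₀)
        (gbar (xb ξ) * (Real.cos α - a ξ * Real.sin α)) ξ :=
      hout.comp ξ (hxbD ξ hξ)
    have hR : HasDerivAt (fun ξ' => ξ' * Real.sin α + y ξ' t₀ * Real.cos α)
        (Real.sin α + a ξ * Real.cos α) ξ := by
      have h1 : HasDerivAt (fun ξ' : ℝ => ξ' * Real.sin α) (1 * Real.sin α) ξ :=
        (hasDerivAt_id ξ).mul_const _
      have h2 : HasDerivAt (fun ξ' : ℝ => y ξ' t₀ * Real.cos α) (a ξ * Real.cos α) ξ :=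
        (hfd ξ hξ).mul_const _
      exact (h1.add h2).congr_deriv (by ring)
    have heq : (fun ξ' => ybar (xb ξ') t₀)
        =ᶠ[nhds ξ] (fun ξ' => ξ' * Real.sin α + y ξ' t₀ * Real.cos α) := by
      filter_upwards [hUopen.mem_nhds hξ] with ξ' hξ'
      exact hrot (ξ', t₀) hξ'
    exact (hL.congr_of_eventuallyEq heq.symm).unique hR
  set a₀ : ℝ := a x₀ with ha₀
  set s : ℝ := gbar X with hsDef
  set c : ℝ := Real.cos α - a₀ * Real.sin α with hcDef
  have hE1₀ : s * c = Real.sin α + a₀ * Real.cos α := by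
    have := E1 x₀ hx₀U
    rw [hXxb] at this
    exact this
  have hc0 : c ≠ 0 := by
    intro h
    have h0 : Real.sin α + a₀ * Real.cos α = 0 := by
      rw [← hE1₀, h, mul_zero]
    have hpyt := Real.sin_sq_add_cos_sq α
    have hcc : Real.cos α - a₀ * Real.sin α = 0 := by rw [← hcDef]; exact h
    have h10 : (1 : ℝ) = 0 := by
      linear_combination Real.cos α * hcc + Real.sin α * h0 - hpyt
    exact one_ne_zero h10
  set q : ℝ := s * Real.sin α + Real.cos α with hqDef
  have hqc : q * c = 1 := by
    have hpyt := Real.sin_sq_add_cos_sq α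
    linear_combination c * hqDef + Real.sin α * hE1₀ + Real.cos α * hcDef + hpyt
  have hq0 : q ≠ 0 := by
    intro h; rw [h, zero_mul] at hqc; exact zero_ne_one hqc
  -- Second-order relation E3 at x₀
  set w : ℝ := deriv gbar X with hwDef
  have E3 : w * c * c + s * (0 - m * Real.sin α) = m * Real.cos α := by
    have hgb : HasDerivAt gbar (deriv gbar X) X := (hgbarD X).hasDerivAt
    have hcomp : HasDerivAt (fun ξ => gbar (xb ξ)) (w * c) x₀ := by
      have h := hgb.comp x₀ (hxbD x₀ hx₀U)
      exact h
    have hinner : HasDerivAt (fun ξ => Real.cos α - a ξ * Real.sin α)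
        (0 - m * Real.sin α) x₀ :=
      (hasDerivAt_const x₀ (Real.cos α)).sub (ham.mul_const _)
    have hL : HasDerivAt (fun ξ => gbar (xb ξ) * (Real.cos α - a ξ * Real.sin α))
        (w * c * c + s * (0 - m * Real.sin α)) x₀ := by
      exact hcomp.mul hinner
    have hR : HasDerivAt (fun ξ => Real.sin α + a ξ * Real.cos α) (m * Real.cos α) x₀ := by
      exact ((hasDerivAt_const x₀ (Real.sin α)).add (ham.mul_const (Real.cos α))).congr_deriv (by ring)
    have heq : (fun ξ => gbar (xb ξ) * (Real.cos α - a ξ * Real.sin α))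
        =ᶠ[nhds x₀] (fun ξ => Real.sin α + a ξ * Real.cos α) := by
      filter_upwards [hUopen.mem_nhds hx₀U] with ξ hξ
      exact E1 ξ hξ
    exact (hL.congr_of_eventuallyEq heq.symm).unique hR
  -- Time relation E2
  have hYd : DifferentiableAt ℝ Y (x₀, t₀) :=
    ((hyC2.contDiffAt (hΩ.mem_nhds hp)).differentiableAt (by norm_num))
  have hbD : HasDerivAt (fun τ => y x₀ τ) (deriv (fun τ => y x₀ τ) t₀) t₀ := by
    have hline : HasDerivAt (fun τ : ℝ => ((x₀, τ) : ℝ × ℝ)) ((0 : ℝ), (1 : ℝ)) t₀ :=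
      (hasDerivAt_const t₀ x₀).prodMk (hasDerivAt_id t₀)
    have := (hYd.hasFDerivAt.comp_hasDerivAt t₀ hline)
    exact this.differentiableAt.hasDerivAt
  set b : ℝ := deriv (fun τ => y x₀ τ) t₀ with hbDef
  have hYbarD : DifferentiableAt ℝ Ybar (X, t₀) :=
    (hybarC2.differentiable (by norm_num)) (X, t₀)
  -- identify s and u with fderiv applications
  have hs_f : HasDerivAt (fun ξ => ybar ξ t₀) (fderiv ℝ Ybar (X, t₀) (1, 0)) X := by
    have hline : HasDerivAt (fun ξ : ℝ => ((ξ, t₀) : ℝ × ℝ)) ((1 : ℝ), (0 : ℝ)) X :=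
      (hasDerivAt_id X).prodMk (hasDerivAt_const X t₀)
    exact hYbarD.hasFDerivAt.comp_hasDerivAt X hline
  have hs_eq : s = fderiv ℝ Ybar (X, t₀) (1, 0) := by
    rw [hsDef, hgbarDef]; exact hs_f.deriv
  have hu_f : HasDerivAt (fun τ => ybar X τ) (fderiv ℝ Ybar (X, t₀) (0, 1)) t₀ := by
    have hline : HasDerivAt (fun τ : ℝ => ((X, τ) : ℝ × ℝ)) ((0 : ℝ), (1 : ℝ)) t₀ :=
      (hasDerivAt_const t₀ X).prodMk (hasDerivAt_id t₀)
    exact hYbarD.hasFDerivAt.comp_hasDerivAt t₀ hline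
  set u : ℝ := deriv (fun τ => ybar X τ) t₀ with huDef
  have hu_eq : u = fderiv ℝ Ybar (X, t₀) (0, 1) := hu_f.deriv
  have E2 : (0 - b * Real.sin α) * s + u = b * Real.cos α := by
    have hinner : HasDerivAt (fun τ => ((x₀ * Real.cos α - y x₀ τ * Real.sin α, τ) : ℝ × ℝ))
        ((0 - b * Real.sin α), (1 : ℝ)) t₀ := by
      refine HasDerivAt.prodMk ?_ (hasDerivAt_id t₀)
      exact (hasDerivAt_const t₀ (x₀ * Real.cos α)).sub (hbD.mul_const _)
    have hL : HasDerivAt (fun τ => ybar (x₀ * Real.cos α - y x₀ τ * Real.sin α) τ)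
        (fderiv ℝ Ybar (X, t₀) ((0 - b * Real.sin α), (1 : ℝ))) t₀ := by
      have h := HasFDerivAt.comp_hasDerivAt (f := fun τ : ℝ =>
          ((x₀ * Real.cos α - y x₀ τ * Real.sin α, τ) : ℝ × ℝ)) t₀
          hYbarD.hasFDerivAt hinner
      exact h
    have hsplit : fderiv ℝ Ybar (X, t₀) ((0 - b * Real.sin α), (1 : ℝ))
        = (0 - b * Real.sin α) * s + u := by
      have hvec : ((0 - b * Real.sin α, (1 : ℝ)) : ℝ × ℝ)
          = (0 - b * Real.sin α) • ((1 : ℝ), (0 : ℝ)) + ((0 : ℝ), (1 : ℝ)) := by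
        simp
      rw [hvec, map_add, map_smul, hs_eq, hu_eq]
      simp [smul_eq_mul]
    have hR : HasDerivAt (fun τ => x₀ * Real.sin α + y x₀ τ * Real.cos α)
        (b * Real.cos α) t₀ := by
      exact ((hasDerivAt_const t₀ (x₀ * Real.sin α)).add (hbD.mul_const (Real.cos α))).congr_deriv (by ring)
    have hVopen : IsOpen {τ : ℝ | (x₀, τ) ∈ Ω} :=
      hΩ.preimage (by fun_prop : Continuous fun τ : ℝ => (x₀, τ))
    have heq : (fun τ => ybar (x₀ * Real.cos α - y x₀ τ * Real.sin α) τ)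
        =ᶠ[nhds t₀] (fun τ => x₀ * Real.sin α + y x₀ τ * Real.cos α) := by
      filter_upwards [hVopen.mem_nhds hp] with τ hτ
      exact hrot (x₀, τ) hτ
    have := (hL.congr_of_eventuallyEq heq.symm).unique hR
    rw [← hsplit, this]
  -- the PDE at (x₀, t₀)
  have hPDE : b = D a₀ * m := hyPDE (x₀, t₀) hp
  -- final algebra
  have hsa : (s * Real.cos α - Real.sin α) / q = a₀ := by
    rw [div_eq_iff hq0]
    linear_combination hE1₀ - s * hcDef + a₀ * hqDef
  have hwc : w * c ^ 2 = m * q := by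
    linear_combination E3 - m * hqDef
  have hw3 : w = m * q ^ 3 := by
    linear_combination q ^ 2 * hwc - w * (q * c + 1) * hqc
  have hu2 : u = b * q := by
    linear_combination E2 - b * hqDef
  rw [hsa, hu2, hw3, hPDE]
  rw [div_mul_eq_mul_div, eq_div_iff (pow_ne_zero 2 hq0)]
  ring
end

section
/- Let β > 0 and t₀ ∈ ℝ. The function y(x,t) = (1/β)·√(2(t₀ − t) − x²), defined on {(x,t) : t < t₀, x² < 2(t₀ − t)}, satisfies the anisotropic diffusion equation y_t = D(y_x)·y_xx with D(u) = 1/(1 + (βu)²) at every point of its domain. Its graph, together with its reflection in the x-axis, is the homothetically shrinking ельlipse x²/(2(t₀ − t)) + β²y²/(2(t₀ − t)) = 1, elongated in the direction of weakest evaporation. -/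
lemma inner_hasDerivAt_x (c ξ : ℝ) :
    HasDerivAt (fun ξ' : ℝ => c - ξ' ^ 2) (-(2 * ξ)) ξ := by
  simpa using ((hasDerivAt_pow 2 ξ).const_sub c)

lemma spatial_hasDerivAt (β c : ℝ) (hβ : 0 < β) (ξ : ℝ) (hξ : ξ ^ 2 < c) :
    HasDerivAt (fun ξ' : ℝ => (1 / β) * Real.sqrt (c - ξ' ^ 2))
      (-ξ / (β * Real.sqrt (c - ξ ^ 2))) ξ := by
  have hs : 0 < c - ξ ^ 2 := by linarith
  have hsq : Real.sqrt (c - ξ ^ 2) ≠ 0 := by positivity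
  have h1 : HasDerivAt (fun ξ' : ℝ => Real.sqrt (c - ξ' ^ 2))
      (1 / (2 * Real.sqrt (c - ξ ^ 2)) * (-(2 * ξ))) ξ :=
    (Real.hasDerivAt_sqrt (ne_of_gt hs)).comp ξ (inner_hasDerivAt_x c ξ)
  have := h1.const_mul (1 / β)
  refine this.congr_deriv ?_
  field_simp

/-- The function `y(x,t) = (1/β)·√(2(t₀−t) − x²)` satisfies the anisotropic
diffusion equation `y_t = D(y_x)·y_xx` with `D(u) = 1/(1+(βu)²)` on its domain
`{(x,t) : t < t₀, x² < 2(t₀−t)}`, and its graph (together with its reflection in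
the x-axis) is the homothetically shrinking ellipse
`x²/(2(t₀−t)) + β²y²/(2(t₀−t)) = 1`. -/
theorem shrinking_ellipse_for_anisotropic_diffusion
    (β : ℝ) (hβ : 0 < β) (t₀ : ℝ)
    (y : ℝ → ℝ → ℝ)
    (hy : ∀ x t : ℝ, y x t = (1 / β) * Real.sqrt (2 * (t₀ - t) - x ^ 2))
    (x t : ℝ) (ht : t < t₀) (hx : x ^ 2 < 2 * (t₀ - t)) :
    deriv (fun τ => y x τ) t
      = (1 / (1 + (β * deriv (fun ξ => y ξ t) x) ^ 2))
          * deriv (fun ξ => deriv (fun ξ' => y ξ' t) ξ) x ∧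
    x ^ 2 / (2 * (t₀ - t)) + β ^ 2 * (y x t) ^ 2 / (2 * (t₀ - t)) = 1 := by
  set c : ℝ := 2 * (t₀ - t) with hc
  have hs : 0 < c - x ^ 2 := by linarith
  set s : ℝ := c - x ^ 2 with hsdef
  have hssq : Real.sqrt s ^ 2 = s := Real.sq_sqrt hs.le
  have hsqpos : 0 < Real.sqrt s := Real.sqrt_pos.mpr hs
  have hβ' : β ≠ 0 := ne_of_gt hβ
  have hsq : Real.sqrt s ≠ 0 := ne_of_gt hsqpos
  constructor
  · -- time derivative
    have hinner : HasDerivAt (fun τ : ℝ => 2 * (t₀ - τ) - x ^ 2) (-2) t := by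
      have : HasDerivAt (fun τ : ℝ => t₀ - τ) (-1) t := by
        simpa using (hasDerivAt_id t).const_sub t₀
      simpa using (this.const_mul 2).sub_const (x ^ 2)
    have h1 : HasDerivAt (fun τ : ℝ => Real.sqrt (2 * (t₀ - τ) - x ^ 2))
        (1 / (2 * Real.sqrt s) * (-2)) t :=
      (Real.hasDerivAt_sqrt (ne_of_gt hs)).comp t hinner
    have h2 := (h1.const_mul (1 / β))
    have hyt : deriv (fun τ => y x τ) t = -1 / (β * Real.sqrt s) := by
      have : (fun τ => y x τ) = fun τ : ℝ => (1 / β) * Real.sqrt (2 * (t₀ - τ) - x ^ 2) := by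
        funext τ; exact hy x τ
      rw [this, h2.deriv]
      field_simp
    -- first spatial derivative formula, valid near x
    have hopen : ∀ᶠ ξ in nhds x, ξ ^ 2 < c := by
      have : IsOpen {ξ : ℝ | ξ ^ 2 < c} :=
        isOpen_lt (by continuity) continuous_const
      exact this.mem_nhds hx
    have hd1 : ∀ ξ : ℝ, ξ ^ 2 < c →
        deriv (fun ξ' => y ξ' t) ξ = -ξ / (β * Real.sqrt (c - ξ ^ 2)) := by
      intro ξ hξ
      have : (fun ξ' => y ξ' t) = fun ξ' : ℝ => (1 / β) * Real.sqrt (c - ξ' ^ 2) := by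
        funext ξ'; rw [hy ξ' t]
      rw [this, (spatial_hasDerivAt β c hβ ξ hξ).deriv]
    have heq : (fun ξ => deriv (fun ξ' => y ξ' t) ξ)
        =ᶠ[nhds x] fun ξ => -ξ / (β * Real.sqrt (c - ξ ^ 2)) :=
      hopen.mono fun ξ hξ => hd1 ξ hξ
    -- second spatial derivative
    have hv : HasDerivAt (fun ξ : ℝ => β * Real.sqrt (c - ξ ^ 2))
        (β * (1 / (2 * Real.sqrt s) * (-(2 * x)))) x := by
      exact ((Real.hasDerivAt_sqrt (ne_of_gt hs)).comp x (inner_hasDerivAt_x c x)).const_mul β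
    have hu : HasDerivAt (fun ξ : ℝ => -ξ) (-1) x := by
      exact (hasDerivAt_id' x).neg
    have hvne : β * Real.sqrt s ≠ 0 := mul_ne_zero hβ' hsq
    have hg : HasDerivAt (fun ξ : ℝ => -ξ / (β * Real.sqrt (c - ξ ^ 2)))
        (((-1) * (β * Real.sqrt s) - (-x) * (β * (1 / (2 * Real.sqrt s) * (-(2 * x)))))
          / (β * Real.sqrt s) ^ 2) x := hu.div hv hvne
    have hd2 : deriv (fun ξ => deriv (fun ξ' => y ξ' t) ξ) x
        = ((-1) * (β * Real.sqrt s) - (-x) * (β * (1 / (2 * Real.sqrt s) * (-(2 * x)))))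
          / (β * Real.sqrt s) ^ 2 := by
      rw [heq.deriv_eq, hg.deriv]
    have hd1x : deriv (fun ξ => y ξ t) x = -x / (β * Real.sqrt s) := hd1 x hx
    rw [hyt, hd1x, hd2]
    have hcs : c = s + x ^ 2 := by simp [hsdef]
    field_simp
    nlinarith [hssq, sq_nonneg (Real.sqrt s), sq_nonneg x, mul_pos hsqpos hs,
      mul_pos hβ hsqpos]
  · rw [hy x t]
    have : ((1 : ℝ) / β * Real.sqrt s) ^ 2 = s / β ^ 2 := by
      rw [mul_pow, hssq]; field_simp
    rw [this]
    have hcpos : 0 < c := by nlinarith [sq_nonneg x]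
    field_simp
    ring
end

section
/- Let v be a C³ real-valued function on an open interval I satisfying the ODE v'''(x) + (1/2)·(v'(x))³ = 0 on I. Then the two functions x ↦ v''(x)·cos(v(x)) + (1/2)·(v'(x))²·sin(v(x)) and x ↦ −v''(x)·sin(v(x)) + (1/2)·(v'(x))²·cos(v(x)) have identically zero derivative on I, i.e., they are first integrals of the ODE, constant equal to some λ, μ ∈ ℝ respectively; moreover these imply (v'(x))² = 2(μ·cos(v(x)) + λ·sin(v(x))) on I. -/
/-- First integrals of the ODE `v''' + (1/2)(v')³ = 0` arising in functional
separation of variables for the anisotropic diffusion model: the functions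
`v''·cos v + (1/2)(v')²·sin v` and `−v''·sin v + (1/2)(v')²·cos v` have zero
derivative on `I`, hence are constants `λ`, `μ`, and consequently
`(v')² = 2(μ·cos v + λ·sin v)` on `I`. -/
theorem first_integrals_of_separation_ODE
    (a b : ℝ) (v : ℝ → ℝ)
    (hv : ContDiffOn ℝ 3 v (Set.Ioo a b))
    (hODE : ∀ x ∈ Set.Ioo a b,
      deriv (deriv (deriv v)) x + (1 / 2) * (deriv v x) ^ 3 = 0) :
    (∀ x ∈ Set.Ioo a b,
      deriv (fun ξ => deriv (deriv v) ξ * Real.cos (v ξ)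
        + (1 / 2) * (deriv v ξ) ^ 2 * Real.sin (v ξ)) x = 0) ∧
    (∀ x ∈ Set.Ioo a b,
      deriv (fun ξ => -(deriv (deriv v) ξ) * Real.sin (v ξ)
        + (1 / 2) * (deriv v ξ) ^ 2 * Real.cos (v ξ)) x = 0) ∧
    ∃ lam mu : ℝ, ∀ x ∈ Set.Ioo a b,
      deriv (deriv v) x * Real.cos (v x) + (1 / 2) * (deriv v x) ^ 2 * Real.sin (v x) = lam ∧
      -(deriv (deriv v) x) * Real.sin (v x) + (1 / 2) * (deriv v x) ^ 2 * Real.cos (v x) = mu ∧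
      (deriv v x) ^ 2 = 2 * (mu * Real.cos (v x) + lam * Real.sin (v x)) := by
  have hI : IsOpen (Set.Ioo a b) := isOpen_Ioo
  have hv1 : ContDiffOn ℝ 2 (deriv v) (Set.Ioo a b) := hv.deriv_of_isOpen hI (by norm_num)
  have hv2 : ContDiffOn ℝ 1 (deriv (deriv v)) (Set.Ioo a b) :=
    hv1.deriv_of_isOpen hI (by norm_num)
  have hd : ∀ x ∈ Set.Ioo a b,
      HasDerivAt v (deriv v x) x ∧ HasDerivAt (deriv v) (deriv (deriv v) x) x ∧
      HasDerivAt (deriv (deriv v)) (deriv (deriv (deriv v)) x) x := by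
    intro x hx
    refine ⟨?_, ?_, ?_⟩
    · exact ((hv.differentiableOn (by norm_num)).differentiableAt
        (hI.mem_nhds hx)).hasDerivAt
    · exact ((hv1.differentiableOn (by norm_num)).differentiableAt
        (hI.mem_nhds hx)).hasDerivAt
    · exact ((hv2.differentiableOn (by norm_num)).differentiableAt
        (hI.mem_nhds hx)).hasDerivAt
  -- The first-integral functions
  set F : ℝ → ℝ := fun ξ => deriv (deriv v) ξ * Real.cos (v ξ)
      + (1 / 2) * (deriv v ξ) ^ 2 * Real.sin (v ξ) with hF
  set G : ℝ → ℝ := fun ξ => -(deriv (deriv v) ξ) * Real.sin (v ξ)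
      + (1 / 2) * (deriv v ξ) ^ 2 * Real.cos (v ξ) with hG
  have hFd : ∀ x ∈ Set.Ioo a b, HasDerivAt F 0 x := by
    intro x hx
    obtain ⟨h1, h2, h3⟩ := hd x hx
    have hcos : HasDerivAt (fun ξ => Real.cos (v ξ)) (-Real.sin (v x) * deriv v x) x :=
      (Real.hasDerivAt_cos (v x)).comp x h1
    have hsin : HasDerivAt (fun ξ => Real.sin (v ξ)) (Real.cos (v x) * deriv v x) x :=
      (Real.hasDerivAt_sin (v x)).comp x h1
    have hsq : HasDerivAt (fun ξ => (1/2 : ℝ) * (deriv v ξ) ^ 2)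
        ((1/2 : ℝ) * (2 * deriv v x ^ 1 * deriv (deriv v) x)) x :=
      (h2.pow 2).const_mul _
    have := ((h3.mul hcos).add (hsq.mul hsin))
    have hODEx := hODE x hx
    refine this.congr_deriv ?_
    linear_combination Real.cos (v x) * hODEx
  have hGd : ∀ x ∈ Set.Ioo a b, HasDerivAt G 0 x := by
    intro x hx
    obtain ⟨h1, h2, h3⟩ := hd x hx
    have hcos : HasDerivAt (fun ξ => Real.cos (v ξ)) (-Real.sin (v x) * deriv v x) x :=
      (Real.hasDerivAt_cos (v x)).comp x h1
    have hsin : HasDerivAt (fun ξ => Real.sin (v ξ)) (Real.cos (v x) * deriv v x) x :=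
      (Real.hasDerivAt_sin (v x)).comp x h1
    have hsq : HasDerivAt (fun ξ => (1/2 : ℝ) * (deriv v ξ) ^ 2)
        ((1/2 : ℝ) * (2 * deriv v x ^ 1 * deriv (deriv v) x)) x :=
      (h2.pow 2).const_mul _
    have := ((h3.neg.mul hsin).add (hsq.mul hcos))
    have hODEx := hODE x hx
    refine this.congr_deriv ?_
    simp only [Pi.neg_apply]
    linear_combination -Real.sin (v x) * hODEx
  refine ⟨fun x hx => (hFd x hx).deriv, fun x hx => (hGd x hx).deriv, ?_⟩
  rcases Set.eq_empty_or_nonempty (Set.Ioo a b) with he | ⟨x₀, hx₀⟩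
  · exact ⟨0, 0, fun x hx => by simp [he] at hx⟩
  refine ⟨F x₀, G x₀, fun x hx => ?_⟩
  have hconst : ∀ (H : ℝ → ℝ), (∀ y ∈ Set.Ioo a b, HasDerivAt H 0 y) → H x = H x₀ := by
    intro H hH
    refine (convex_Ioo a b).is_const_of_fderivWithin_eq_zero
      (fun y hy => ((hH y hy).differentiableAt).differentiableWithinAt) ?_ hx hx₀
    intro y hy
    rw [fderivWithin_of_isOpen hI hy, (hH y hy).hasFDerivAt.fderiv]
    ext
    simp
  have hFx : F x = F x₀ := hconst F hFd
  have hGx : G x = G x₀ := hconst G hGd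
  refine ⟨hFx, hGx, ?_⟩
  have hpyth := Real.sin_sq_add_cos_sq (v x)
  have hF' : F x = deriv (deriv v) x * Real.cos (v x)
      + (1 / 2) * (deriv v x) ^ 2 * Real.sin (v x) := rfl
  have hG' : G x = -(deriv (deriv v) x) * Real.sin (v x)
      + (1 / 2) * (deriv v x) ^ 2 * Real.cos (v x) := rfl
  have e1 : deriv (deriv v) x * Real.cos (v x)
      + (1 / 2) * (deriv v x) ^ 2 * Real.sin (v x) = F x₀ := hF'.symm.trans hFx
  have e2 : -(deriv (deriv v) x) * Real.sin (v x)
      + (1 / 2) * (deriv v x) ^ 2 * Real.cos (v x) = G x₀ := hG'.symm.trans hGx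
  linear_combination 2 * Real.sin (v x) * e1 + 2 * Real.cos (v x) * e2
    - (deriv v x) ^ 2 * hpyth
end
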